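/- Let V be a real Hilbert space and let F : ℝ × V × ℝ → ℝ be such that for every t the map (v,σ) ↦ F(t,v,σ) is twice continuously Fréchet differentiable. Let t⁰ < t¹, β > 0, and let (v⁰,σ⁰) : [t⁰,t¹] → V × ℝ be continuously differentiable with ‖(v⁰)′(t)‖² + |(σ⁰)′(t)|² ≤ β for all t, and with D_vF(t,v⁰(t),σ⁰(t)) = 0 and ∂_σF(t,v⁰(t),σ⁰(t)) = 0 for every t ∈ [t⁰,t¹]. Assume there exist α > 0 and r > 0 such that for every t ∈ [t⁰,t¹] and every (v,σ) ∈ V × ℝ with ‖v − v⁰(t)‖ ≤ r and |σ − σ⁰(t)| ≤ r, the second differential satisfies D²_{(v,σ)}F(t,v,σ)[(w,τ),(w,τ)] ≥ α·(‖w‖² + τ²) for all (w,τ) ∈ V × ℝ. For each ε > 0 let (v_ε,σ_ε) : [t⁰,t¹] → V × ℝ be continuously differentiable and satisfy, for every t ∈ [t⁰,t¹]: ε·⟨v̇_ε(t), w⟩ = −D_vF(t,v_ε(t),σ_ε(t))(w) for all w ∈ V, and ε·σ̇_ε(t) = −∂_σF(t,v_ε(t),σ_ε(t)). If ‖v_ε(t⁰)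 − v⁰(t⁰)‖ → 0 and σ_ε(t⁰) → σ⁰(t⁰) as ε → 0⁺, then for every t ∈ [t⁰,t¹]: ‖v_ε(t) − v⁰(t)‖ → 0 and σ_ε(t) → σ⁰(t) as ε → 0⁺. -/

import Mathlib

open Set
open scoped RealInnerProductSpace

private lemma fderiv_pair_decomp {V : Type*} [NormedAddCommGroup V] [InnerProductSpace ℝ V]
    (F : ℝ → V → ℝ → ℝ) (t : ℝ)
    (hF : ContDiff ℝ 2 (fun p : V × ℝ => F t p.1 p.2)) (a : V) (b : ℝ) (w : V) (τ : ℝ) :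
    fderiv ℝ (fun p : V × ℝ => F t p.1 p.2) (a, b) (w, τ)
      = fderiv ℝ (fun u => F t u b) a w + τ * deriv (fun s => F t a s) b := by
  have hd : DifferentiableAt ℝ (fun p : V × ℝ => F t p.1 p.2) (a, b) :=
    (hF.differentiable two_ne_zero) (a, b)
  have h1 : HasFDerivAt (fun u : V => (u, b))
      ((ContinuousLinearMap.id ℝ V).prod 0) a :=
    HasFDerivAt.prodMk (hasFDerivAt_id a) (hasFDerivAt_const b a)
  have h2 : HasFDerivAt (fun u : V => F t u b)
      ((fderiv ℝ (fun p : V × ℝ => F t p.1 p.2) (a, b)).comp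
        ((ContinuousLinearMap.id ℝ V).prod 0)) a :=
    by have := hd.hasFDerivAt.comp a h1; exact this
  have h3 : HasDerivAt (fun s : ℝ => ((a, s) : V × ℝ)) ((0 : V), (1 : ℝ)) b :=
    HasDerivAt.prodMk (hasDerivAt_const b a) (hasDerivAt_id b)
  have h4 : HasDerivAt (fun s : ℝ => F t a s)
      (fderiv ℝ (fun p : V × ℝ => F t p.1 p.2) (a, b) ((0 : V), (1 : ℝ))) b :=
    hd.hasFDerivAt.comp_hasDerivAt b h3
  rw [h2.fderiv, h4.deriv]
  have key : ((w, τ) : V × ℝ) = (w, (0 : ℝ)) + τ • (((0 : V), (1 : ℝ)) : V × ℝ) := by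
    simp [Prod.ext_iff]
  rw [key, map_add, map_smul]
  simp [smul_eq_mul]

private lemma cs_pair (x y u v : ℝ) (hx : 0 ≤ x) (hy : 0 ≤ y) (hu : 0 ≤ u) (hv : 0 ≤ v) :
    x * u + y * v ≤ Real.sqrt ((x ^ 2 + y ^ 2) * (u ^ 2 + v ^ 2)) := by
  rw [show x * u + y * v = Real.sqrt ((x * u + y * v) ^ 2) from
    (Real.sqrt_sq (by positivity)).symm]
  apply Real.sqrt_le_sqrt
  nlinarith [sq_nonneg (x * v - y * u)]

set_option maxHeartbeats 1000000

/-- Theorem 4.4 (convergence part, abstract form): along a path of critical points of `F`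
near which the second differential of `F` in `(v,σ)` is uniformly strictly positive
definite, the solutions of the ε-gradient flow converge pointwise to the critical path
as ε → 0⁺. -/
theorem epsilon_gradient_flow_converges_to_critical_path
    {V : Type*} [NormedAddCommGroup V] [InnerProductSpace ℝ V] [CompleteSpace V]
    (F : ℝ → V → ℝ → ℝ)
    (hF : ∀ t : ℝ, ContDiff ℝ 2 (fun p : V × ℝ => F t p.1 p.2))
    (t0 t1 : ℝ) (ht01 : t0 < t1) (β : ℝ) (hβ : 0 < β)
    (v0 : ℝ → V) (v0' : ℝ → V) (s0 s0' : ℝ → ℝ)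
    (hv0 : ∀ t ∈ Icc t0 t1, HasDerivAt v0 (v0' t) t)
    (hv0' : ContinuousOn v0' (Icc t0 t1))
    (hs0 : ∀ t ∈ Icc t0 t1, HasDerivAt s0 (s0' t) t)
    (hs0' : ContinuousOn s0' (Icc t0 t1))
    (hbound : ∀ t ∈ Icc t0 t1, ‖v0' t‖ ^ 2 + |s0' t| ^ 2 ≤ β)
    (hcrit1 : ∀ t ∈ Icc t0 t1, fderiv ℝ (fun w => F t w (s0 t)) (v0 t) = 0)
    (hcrit2 : ∀ t ∈ Icc t0 t1, deriv (fun s => F t (v0 t) s) (s0 t) = 0)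
    (α r : ℝ) (hα : 0 < α) (hr : 0 < r)
    (hposdef : ∀ t ∈ Icc t0 t1, ∀ (v : V) (s : ℝ),
      ‖v - v0 t‖ ≤ r → |s - s0 t| ≤ r →
      ∀ (w : V) (τ : ℝ),
        α * (‖w‖ ^ 2 + τ ^ 2) ≤
          (fderiv ℝ (fderiv ℝ (fun p : V × ℝ => F t p.1 p.2)) (v, s)) (w, τ) (w, τ))
    (vε : ℝ → ℝ → V) (vε' : ℝ → ℝ → V) (sε sε' : ℝ → ℝ → ℝ)
    (hvε : ∀ ε > (0:ℝ), ∀ t ∈ Icc t0 t1, HasDerivAt (vε ε) (vε' ε t) t)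
    (hvε' : ∀ ε > (0:ℝ), ContinuousOn (vε' ε) (Icc t0 t1))
    (hsε : ∀ ε > (0:ℝ), ∀ t ∈ Icc t0 t1, HasDerivAt (sε ε) (sε' ε t) t)
    (hsε' : ∀ ε > (0:ℝ), ContinuousOn (sε' ε) (Icc t0 t1))
    (heqv : ∀ ε > (0:ℝ), ∀ t ∈ Icc t0 t1, ∀ w : V,
      ε * ⟪vε' ε t, w⟫ = -(fderiv ℝ (fun u => F t u (sε ε t)) (vε ε t)) w)
    (heqs : ∀ ε > (0:ℝ), ∀ t ∈ Icc t0 t1,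
      ε * sε' ε t = -(deriv (fun s => F t (vε ε t) s) (sε ε t)))
    (hinitv : Filter.Tendsto (fun ε => ‖vε ε t0 - v0 t0‖)
      (nhdsWithin 0 (Ioi 0)) (nhds 0))
    (hinits : Filter.Tendsto (fun ε => sε ε t0)
      (nhdsWithin 0 (Ioi 0)) (nhds (s0 t0))) :
    ∀ t ∈ Icc t0 t1,
      Filter.Tendsto (fun ε => ‖vε ε t - v0 t‖) (nhdsWithin 0 (Ioi 0)) (nhds 0) ∧
      Filter.Tendsto (fun ε => sε ε t) (nhdsWithin 0 (Ioi 0)) (nhds (s0 t)) := by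
  -- The squared distance to the critical path
  set Q : ℝ → ℝ → ℝ := fun ε t => ‖vε ε t - v0 t‖ ^ 2 + (sε ε t - s0 t) ^ 2 with hQdef
  -- Key Grönwall-type barrier estimate
  have key : ∀ c : ℝ, 0 < c → c ≤ r ^ 2 → ∀ ε : ℝ, 0 < ε → ε ^ 2 * β / α ^ 2 < c →
      Q ε t0 ≤ c → ∀ t ∈ Icc t0 t1, Q ε t ≤ c := by
    intro c hc hcr ε hε hεc h0 t ht
    set Q' : ℝ → ℝ := fun x =>
      2 * ⟪vε ε x - v0 x, vε' ε x - v0' x⟫ + 2 * (sε ε x - s0 x) * (sε' ε x - s0' x)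
      with hQ'def
    have hQderiv : ∀ x ∈ Icc t0 t1, HasDerivAt (Q ε) (Q' x) x := by
      intro x hx
      have he : HasDerivAt (fun y => vε ε y - v0 y) (vε' ε x - v0' x) x :=
        (hvε ε hε x hx).sub (hv0 x hx)
      have hsd : HasDerivAt (fun y => sε ε y - s0 y) (sε' ε x - s0' x) x :=
        (hsε ε hε x hx).sub (hs0 x hx)
      have h1 : HasDerivAt (fun y => (⟪vε ε y - v0 y, vε ε y - v0 y⟫ : ℝ))
          (⟪vε ε x - v0 x, vε' ε x - v0' x⟫ + ⟪vε' ε x - v0' x, vε ε x - v0 x⟫) x :=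
        he.inner ℝ he
      have h2 : HasDerivAt (fun y => (sε ε y - s0 y) ^ 2)
          ((2 : ℕ) * (sε ε x - s0 x) ^ 1 * (sε' ε x - s0' x)) x := hsd.pow 2
      have h3 := h1.add h2
      have heq : (fun y => (⟪vε ε y - v0 y, vε ε y - v0 y⟫ : ℝ) + (sε ε y - s0 y) ^ 2)
          = Q ε := by
        funext y
        simp [hQdef, real_inner_self_eq_norm_sq]
      rw [Pi.add_def, heq] at h3
      refine h3.congr_deriv ?_
      rw [hQ'def]
      simp only [real_inner_comm (vε' ε x - v0' x) (vε ε x - v0 x)]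
      push_cast
      ring
    have bound : ∀ x ∈ Ico t0 t1, Q ε x = c → Q' x < 0 := by
      intro x hx hQx
      have hx' : x ∈ Icc t0 t1 := Ico_subset_Icc_self hx
      set e : V := vε ε x - v0 x with hedef
      set τ : ℝ := sε ε x - s0 x with hτdef
      have hQc : ‖e‖ ^ 2 + τ ^ 2 = c := hQx
      have he_r : ‖e‖ ≤ r := by nlinarith [norm_nonneg e, sq_nonneg τ]
      have hτ_r : |τ| ≤ r := by
        have h1 : |τ| ^ 2 ≤ r ^ 2 := by rw [sq_abs]; nlinarith [sq_nonneg ‖e‖]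
        nlinarith [abs_nonneg τ]
      -- second derivative of F in (v,σ)
      have hGdiff : Differentiable ℝ (fderiv ℝ (fun p : V × ℝ => F x p.1 p.2)) :=
        ((hF x).fderiv_right (m := 1) (by norm_num)).differentiable one_ne_zero
      -- the flow equation in pair form
      have hflow : ε * ⟪vε' ε x, e⟫ + ε * (sε' ε x * τ)
          = -(fderiv ℝ (fun p : V × ℝ => F x p.1 p.2) (vε ε x, sε ε x)) (e, τ) := by
        rw [fderiv_pair_decomp F x (hF x) (vε ε x) (sε ε x) e τ]
        have h1 := heqv ε hε x hx' e
        have h2 := heqs ε hε x hx'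
        linear_combination h1 + τ * h2
      -- the criticality in pair form
      have hcritp : (fderiv ℝ (fun p : V × ℝ => F x p.1 p.2) (v0 x, s0 x)) (e, τ) = 0 := by
        rw [fderiv_pair_decomp F x (hF x) (v0 x) (s0 x) e τ, hcrit1 x hx', hcrit2 x hx']
        simp
      -- mean value theorem along the segment
      set Δ : V × ℝ := (e, τ) with hΔdef
      set p₀ : V × ℝ := (v0 x, s0 x) with hp₀def
      set g : ℝ → ℝ := fun θ =>
        (fderiv ℝ (fun p : V × ℝ => F x p.1 p.2) (p₀ + θ • Δ)) Δ with hgdef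
      have hg : ∀ θ : ℝ, HasDerivAt g
          ((fderiv ℝ (fderiv ℝ (fun p : V × ℝ => F x p.1 p.2)) (p₀ + θ • Δ)) Δ Δ) θ := by
        intro θ
        have hpath : HasDerivAt (fun θ : ℝ => p₀ + θ • Δ) Δ θ := by
          simpa using ((hasDerivAt_id θ).smul_const Δ).const_add p₀
        have hcomp : HasDerivAt (fun θ : ℝ => fderiv ℝ (fun p : V × ℝ => F x p.1 p.2) (p₀ + θ • Δ))
            ((fderiv ℝ (fderiv ℝ (fun p : V × ℝ => F x p.1 p.2)) (p₀ + θ • Δ)) Δ) θ :=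
          by have := HasFDerivAt.comp_hasDerivAt (l := fderiv ℝ (fun p : V × ℝ => F x p.1 p.2)) θ (hGdiff (p₀ + θ • Δ)).hasFDerivAt hpath; exact this
        simpa using hcomp.clm_apply (hasDerivAt_const θ Δ)
      obtain ⟨θ, hθ, hslope⟩ := exists_hasDerivAt_eq_slope g
        (fun θ => (fderiv ℝ (fderiv ℝ (fun p : V × ℝ => F x p.1 p.2)) (p₀ + θ • Δ)) Δ Δ)
        one_pos (fun θ _ => (hg θ).continuousAt.continuousWithinAt) (fun θ _ => hg θ)
      have hpt : p₀ + θ • Δ = (v0 x + θ • e, s0 x + θ * τ) := rfl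
      have hpos : α * (‖e‖ ^ 2 + τ ^ 2)
          ≤ (fderiv ℝ (fderiv ℝ (fun p : V × ℝ => F x p.1 p.2)) (p₀ + θ • Δ)) Δ Δ := by
        rw [hpt]
        have ha : ‖(v0 x + θ • e) - v0 x‖ ≤ r := by
          rw [add_sub_cancel_left, norm_smul, Real.norm_eq_abs]
          calc |θ| * ‖e‖ ≤ 1 * ‖e‖ := by
                apply mul_le_mul_of_nonneg_right _ (norm_nonneg e)
                rw [abs_le]; constructor <;> [linarith [hθ.1]; linarith [hθ.2]]
            _ = ‖e‖ := one_mul _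
            _ ≤ r := he_r
        have hb : |(s0 x + θ * τ) - s0 x| ≤ r := by
          rw [add_sub_cancel_left, abs_mul]
          calc |θ| * |τ| ≤ 1 * |τ| := by
                apply mul_le_mul_of_nonneg_right _ (abs_nonneg τ)
                rw [abs_le]; constructor <;> [linarith [hθ.1]; linarith [hθ.2]]
            _ = |τ| := one_mul _
            _ ≤ r := hτ_r
        exact hposdef x hx' (v0 x + θ • e) (s0 x + θ * τ) ha hb e τ
      have hg1 : g 1 = (fderiv ℝ (fun p : V × ℝ => F x p.1 p.2) (vε ε x, sε ε x)) Δ := by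
        have : p₀ + (1 : ℝ) • Δ = (vε ε x, sε ε x) := by
          rw [one_smul, hp₀def, hΔdef, hedef, hτdef]
          simp [Prod.ext_iff]
        rw [hgdef]; simp only [this]
      have hg0 : g 0 = 0 := by
        have : p₀ + (0 : ℝ) • Δ = p₀ := by simp
        rw [hgdef]; simp only [this]; exact hcritp
      -- chain inequalities
      have hmain : α * c ≤ (fderiv ℝ (fun p : V × ℝ => F x p.1 p.2) (vε ε x, sε ε x)) (e, τ) := by
        have h8 := hpos.trans_eq hslope
        rw [hg1, hg0, hΔdef] at h8
        norm_num at h8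
        rw [← hQc]
        linarith [h8]
      -- so the flow term is very negative
      have hεflow : ε * (⟪vε' ε x, e⟫ + sε' ε x * τ) ≤ -(α * c) := by
        nlinarith [hflow, hmain]
      -- bound on the drift term
      have hdrift : -(⟪e, v0' x⟫ + τ * s0' x) ≤ Real.sqrt c * Real.sqrt β := by
        have h1 : -(⟪e, v0' x⟫ + τ * s0' x) ≤ ‖e‖ * ‖v0' x‖ + |τ| * |s0' x| := by
          have h2 : -⟪e, v0' x⟫ ≤ ‖e‖ * ‖v0' x‖ := by
            have := abs_real_inner_le_norm e (v0' x)
            cases abs_cases (⟪e, v0' x⟫ : ℝ) with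
            | inl h => linarith [real_inner_le_norm e (v0' x), this]
            | inr h => linarith
          have h3 : -(τ * s0' x) ≤ |τ| * |s0' x| := by
            rw [← abs_mul]; exact neg_le_abs _
          linarith
        have h4 : ‖e‖ * ‖v0' x‖ + |τ| * |s0' x|
            ≤ Real.sqrt ((‖e‖ ^ 2 + |τ| ^ 2) * (‖v0' x‖ ^ 2 + |s0' x| ^ 2)) :=
          cs_pair _ _ _ _ (norm_nonneg _) (abs_nonneg _) (norm_nonneg _) (abs_nonneg _)
        have h5 : (‖e‖ ^ 2 + |τ| ^ 2) * (‖v0' x‖ ^ 2 + |s0' x| ^ 2) ≤ c * β := by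
          have := hbound x hx'
          rw [sq_abs]
          apply mul_le_mul _ this (by positivity) hc.le
          rw [hQc]
        calc -(⟪e, v0' x⟫ + τ * s0' x) ≤ ‖e‖ * ‖v0' x‖ + |τ| * |s0' x| := h1
          _ ≤ Real.sqrt ((‖e‖ ^ 2 + |τ| ^ 2) * (‖v0' x‖ ^ 2 + |s0' x| ^ 2)) := h4
          _ ≤ Real.sqrt (c * β) := Real.sqrt_le_sqrt h5
          _ = Real.sqrt c * Real.sqrt β := Real.sqrt_mul hc.le β
      -- quantitative negativity
      have hεsq : ε * (Real.sqrt c * Real.sqrt β) < α * c := by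
        have h7 : Real.sqrt c * Real.sqrt β < α * c / ε := by
          rw [show Real.sqrt c * Real.sqrt β = Real.sqrt (c * β) from (Real.sqrt_mul hc.le β).symm]
          rw [Real.sqrt_lt' (by positivity)]
          rw [div_pow, lt_div_iff₀ (by positivity)]
          have h6 : ε ^ 2 * β < c * α ^ 2 := by
            rwa [div_lt_iff₀ (by positivity)] at hεc
          nlinarith [mul_lt_mul_of_pos_left h6 hc]
        have := (lt_div_iff₀ hε).mp h7
        linarith
      -- conclude
      have hεdrift : ε * (-(⟪e, v0' x⟫ + τ * s0' x)) ≤ ε * (Real.sqrt c * Real.sqrt β) :=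
        mul_le_mul_of_nonneg_left hdrift hε.le
      have hQ'x : Q' x = 2 * (⟪vε' ε x, e⟫ + sε' ε x * τ) - 2 * (⟪e, v0' x⟫ + τ * s0' x) := by
        rw [hQ'def]
        simp only [inner_sub_right]
        rw [real_inner_comm e (vε' ε x)]
        ring
      rw [hQ'x]
      nlinarith [hεflow, hεdrift, hεsq, hε]
    -- apply the barrier theorem
    have := image_le_of_deriv_right_lt_deriv_boundary
      (f := Q ε) (f' := Q') (a := t0) (b := t1)
      (fun x hx => (hQderiv x hx).continuousAt.continuousWithinAt)
      (fun x hx => (hQderiv x (Ico_subset_Icc_self hx)).hasDerivWithinAt)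
      (B := fun _ => c) (B' := fun _ => 0) h0 (fun x => hasDerivAt_const x c) bound
    exact this ht
  -- initial value of Q tends to 0
  have hQ0 : Filter.Tendsto (fun ε => Q ε t0) (nhdsWithin 0 (Ioi 0)) (nhds 0) := by
    have h1 : Filter.Tendsto (fun ε => ‖vε ε t0 - v0 t0‖ ^ 2)
        (nhdsWithin 0 (Ioi 0)) (nhds 0) := by
      simpa using hinitv.pow 2
    have h2 : Filter.Tendsto (fun ε => (sε ε t0 - s0 t0) ^ 2)
        (nhdsWithin 0 (Ioi 0)) (nhds 0) := by
      have := hinits.sub_const (s0 t0)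
      simp only [sub_self] at this
      simpa using this.pow 2
    simpa using h1.add h2
  intro t ht
  -- Q at t tends to 0
  have hQt : Filter.Tendsto (fun ε => Q ε t) (nhdsWithin 0 (Ioi 0)) (nhds 0) := by
    rw [tendsto_order]
    constructor
    · intro a ha
      apply Filter.Eventually.of_forall
      intro ε
      have : (0 : ℝ) ≤ Q ε t := by rw [hQdef]; positivity
      linarith
    · intro a ha
      set c : ℝ := min (a / 2) (r ^ 2) with hcdef
      have hc : 0 < c := lt_min (by linarith) (by positivity)
      have hcr : c ≤ r ^ 2 := min_le_right _ _
      have hev1 : ∀ᶠ ε in nhdsWithin (0:ℝ) (Ioi 0), ε ^ 2 * β / α ^ 2 < c := by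
        have hcont : Filter.Tendsto (fun ε : ℝ => ε ^ 2 * β / α ^ 2)
            (nhdsWithin 0 (Ioi 0)) (nhds 0) := by
          have hc2 : Filter.Tendsto (fun ε : ℝ => ε ^ 2 * β / α ^ 2) (nhds 0) (nhds 0) := by
            have : Continuous fun ε : ℝ => ε ^ 2 * β / α ^ 2 := by continuity
            simpa using this.tendsto 0
          exact hc2.mono_left nhdsWithin_le_nhds
        exact hcont.eventually_lt_const hc
      have hev2 : ∀ᶠ ε in nhdsWithin (0:ℝ) (Ioi 0), Q ε t0 ≤ c :=
        hQ0.eventually_le_const hc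
      have hev3 : ∀ᶠ ε in nhdsWithin (0:ℝ) (Ioi 0), (0:ℝ) < ε :=
        eventually_mem_nhdsWithin.mono fun ε hε => hε
      filter_upwards [hev1, hev2, hev3] with ε h1 h2 h3
      have := key c hc hcr ε h3 h1 h2 t ht
      have hca : c < a := lt_of_le_of_lt (min_le_left _ _) (by linarith)
      linarith
  constructor
  · -- norm convergence
    have hsq : Filter.Tendsto (fun ε => ‖vε ε t - v0 t‖ ^ 2) (nhdsWithin 0 (Ioi 0)) (nhds 0) := by
      apply squeeze_zero (fun ε => by positivity) (fun ε => ?_) hQt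
      simp only [hQdef]; nlinarith [sq_nonneg (sε ε t - s0 t)]
    have h := (Real.continuous_sqrt.tendsto 0).comp hsq
    simp only [Function.comp_def, Real.sqrt_zero] at h
    convert h using 1
    funext ε
    exact (Real.sqrt_sq (norm_nonneg _)).symm
  · -- scalar convergence
    have hsq : Filter.Tendsto (fun ε => (sε ε t - s0 t) ^ 2) (nhdsWithin 0 (Ioi 0)) (nhds 0) := by
      apply squeeze_zero (fun ε => by positivity) (fun ε => ?_) hQt
      simp only [hQdef]; nlinarith [sq_nonneg ‖vε ε t - v0 t‖]
    have h := (Real.continuous_sqrt.tendsto 0).comp hsq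
    simp only [Function.comp_def, Real.sqrt_zero, Real.sqrt_sq_eq_abs] at h
    have hdiff : Filter.Tendsto (fun ε => sε ε t - s0 t) (nhdsWithin 0 (Ioi 0)) (nhds 0) :=
      (tendsto_zero_iff_abs_tendsto_zero _).mpr h
    have := hdiff.add_const (s0 t)
    simpa using this
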